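/- For all n, k ≥ 0, U_r(n+k,n) = h_k(r, 1²+r, 2²+r, ..., n²+r), where h_k is the complete homogeneous symmetric polynomial of degree k in the n+1 values j²+r, j = 0,...,n. -/
import Mathlib


/-- `centralU r n k` is the r-central factorial number with even indices of the second kind. -/
def centralU (r : ℕ) : ℕ → ℕ → ℤ
  | 0, 0 => 1
  | 0, _ + 1 => 0
  | n + 1, 0 => (r : ℤ) ^ (n + 1)
  | n + 1, k + 1 => centralU r n k + (((k : ℤ) + 1) ^ 2 + r) * centralU r n (k + 1)

lemma centralU_eq_zero (r : ℕ) : ∀ n k : ℕ, n < k → centralU r n k = 0 := by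
  intro n
  induction n with
  | zero =>
    rintro (_ | k) h
    · omega
    · rfl
  | succ n ih =>
    rintro (_ | k) h
    · omega
    · rw [centralU, ih k (by omega), ih (k + 1) (by omega)]
      ring

lemma centralU_diag (r : ℕ) : ∀ n : ℕ, centralU r n n = 1 := by
  intro n
  induction n with
  | zero => rfl
  | succ n ih =>
    rw [centralU, ih, centralU_eq_zero r n (n + 1) (by omega)]
    ring

lemma centralU_zero_right (r : ℕ) : ∀ j : ℕ, centralU r j 0 = (r : ℤ) ^ j := by
  rintro (_ | j)
  · rfl
  · rfl

lemma sym_insert_eq (a : ℕ) (s : Finset ℕ) (ha : a ∉ s) (k : ℕ) :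
    (insert a s).sym (k + 1) =
      s.sym (k + 1) ∪ ((insert a s).sym k).image (Sym.cons a) := by
  ext m
  simp only [Finset.mem_union, Finset.mem_image, Finset.mem_sym_iff, Finset.mem_insert]
  constructor
  · intro h
    by_cases hm : a ∈ m
    · refine Or.inr ⟨m.erase a hm, ?_, Sym.cons_erase hm⟩
      intro b hb
      have hb' : b ∈ (m : Multiset ℕ).erase a := by rwa [← Sym.coe_erase hm]
      exact h b (Multiset.mem_of_mem_erase hb')
    · refine Or.inl fun b hb => ?_
      rcases h b hb with rfl | hbs
      · exact absurd hb hm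
      · exact hbs
  · rintro (h | ⟨m', hm', rfl⟩)
    · exact fun b hb => Or.inr (h b hb)
    · intro b hb
      rw [Sym.mem_cons] at hb
      rcases hb with rfl | hb
      · exact Or.inl rfl
      · exact hm' b hb

lemma sym_sum_split (a : ℕ) (s : Finset ℕ) (ha : a ∉ s) (k : ℕ) (g : ℕ → ℤ) :
    (∑ m ∈ (insert a s).sym (k + 1), (Multiset.map g (m : Multiset ℕ)).prod) =
      (∑ m ∈ s.sym (k + 1), (Multiset.map g (m : Multiset ℕ)).prod) +
        g a * ∑ m ∈ (insert a s).sym k, (Multiset.map g (m : Multiset ℕ)).prod := by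
  have hdisj : Disjoint (s.sym (k + 1)) (((insert a s).sym k).image (Sym.cons a)) := by
    rw [Finset.disjoint_right]
    intro m hm hm'
    obtain ⟨m', _, rfl⟩ := Finset.mem_image.mp hm
    exact ha (Finset.mem_sym_iff.mp hm' a (Sym.mem_cons_self a m'))
  rw [sym_insert_eq a s ha k, Finset.sum_union hdisj, Finset.sum_image, Finset.mul_sum]
  · congr 1
    refine Finset.sum_congr rfl fun m _ => ?_
    rw [Sym.coe_cons, Multiset.map_cons, Multiset.prod_cons]
  · intro x _ y _ h
    exact (Sym.cons_inj_right a x y).mp h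

lemma centralU_aux (r : ℕ) (g : ℕ → ℤ) (hg : ∀ j, g j = (j : ℤ) ^ 2 + r) :
    ∀ k n : ℕ, centralU r (n + k) n =
      ∑ m ∈ (Finset.range (n + 1)).sym k, (Multiset.map g (m : Multiset ℕ)).prod := by
  intro k
  induction k with
  | zero =>
    intro n
    have : ((↑(∅ : Sym ℕ 0)) : Multiset ℕ) = 0 := rfl
    simp [centralU_diag r n, this]
  | succ k ihk =>
    intro n
    induction n with
    | zero =>
      rw [show Finset.range 1 = {0} from rfl, Finset.sym_singleton, Finset.sum_singleton,
        Sym.coe_replicate, Multiset.map_replicate, Multiset.prod_replicate,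
        centralU_zero_right, hg]
      norm_num
    | succ n ihn =>
      have hrange : Finset.range (n + 2) = insert (n + 1) (Finset.range (n + 1)) := by
        rw [Finset.range_add_one]
      have hins : (n + 1) ∉ Finset.range (n + 1) := by simp
      rw [hrange, sym_sum_split _ _ hins _ g, ← hrange]
      have h1 : n + 1 + (k + 1) = (n + k + 1) + 1 := by omega
      rw [h1, centralU]
      have e2 := ihn
      rw [show n + (k + 1) = n + k + 1 from by omega] at e2
      have e3 : centralU r (n + k + 1) (n + 1) =
          ∑ m ∈ (Finset.range (n + 2)).sym k, (Multiset.map g (m : Multiset ℕ)).prod := by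
        rw [show n + k + 1 = (n + 1) + k from by omega]
        exact ihk (n + 1)
      rw [e2, e3, hg (n + 1)]
      push_cast
      ring

theorem centralU_eq_hsymm (r n k : ℕ) :
    centralU r (n + k) n =
      ∑ m ∈ (Finset.range (n + 1)).sym k,
        ((m : Multiset ℕ).map fun j => ((j : ℤ) ^ 2 + r)).prod := by
  rw [centralU_aux r (fun j => (j : ℤ) ^ 2 + r) (fun j => rfl) k n]
  refine Finset.sum_congr rfl fun m _ => ?_
  congr 1
  simp only [Bind.bind, Pure.pure, Multiset.bind_singleton, Multiset.map_map]
  rfl
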